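/- arXiv:2308.05004 — 3 statements merged into one kernel-verified Lean document; each statement's English description precedes it below -/
import Mathlib

section
/- Let X, Y be Banach spaces and H0 a separable Hilbert space continuously embedded and dense in X. If φ : X → Y is continuous, H0-Fréchet differentiable, and D_{H0}φ(x) = 0 for every x ∈ X, then φ is constant. -/
open Filter Topology

/-- If `H₀` is continuously embedded and dense in `X` (`ι` has dense range),
`φ : X → Y` is continuous, `H₀`-Fréchet differentiable, and `D_{H₀}φ(x) = 0` for every `x`,
then `φ` is constant. -/
theorem statement3
    {X Y H0 : Type*} [NormedAddCommGroup X] [NormedSpace ℝ X] [CompleteSpace X]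
    [NormedAddCommGroup Y] [NormedSpace ℝ Y] [CompleteSpace Y]
    [NormedAddCommGroup H0] [InnerProductSpace ℝ H0] [CompleteSpace H0]
    [TopologicalSpace.SeparableSpace H0]
    (ι : H0 →L[ℝ] X) (hι : Function.Injective ι) (hdense : DenseRange ι)
    (φ : X → Y) (hφ : Continuous φ)
    (hF : ∀ x : X,
      Tendsto (fun h : H0 => ‖φ (x + ι h) - φ x - (0 : H0 →L[ℝ] Y) h‖ / ‖h‖) (𝓝 0) (𝓝 0)) :
    ∀ x y : X, φ x = φ y := by
  -- Step 1: φ is constant along directions from H0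
  have step1 : ∀ (x : X) (h : H0), φ (x + ι h) = φ x := by
    intro x h
    by_cases hh : h = 0
    · simp [hh]
    have hnorm : (0:ℝ) < ‖h‖ := norm_pos_iff.mpr hh
    have key : ∀ t : ℝ, HasDerivAt (fun t : ℝ => φ (x + t • ι h)) 0 t := by
      intro t
      rw [hasDerivAt_iff_tendsto]
      have h1 : Tendsto (fun s : ℝ => (s - t) • h) (𝓝 t) (𝓝 0) := by
        have h0 : Tendsto (fun s : ℝ => s - t) (𝓝 t) (𝓝 (t - t)) :=
          ((continuous_id.sub continuous_const).tendsto t)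
        have : Tendsto (fun s : ℝ => s - t) (𝓝 t) (𝓝 0) := by
          simpa [sub_self] using h0
        simpa using this.smul_const h
      have h2 := (hF (x + t • ι h)).comp h1
      have h3 : Tendsto (fun s : ℝ =>
          (‖φ (x + t • ι h + ι ((s - t) • h)) - φ (x + t • ι h) -
            (0 : H0 →L[ℝ] Y) ((s - t) • h)‖ / ‖(s - t) • h‖) * ‖h‖) (𝓝 t) (𝓝 0) := by
        simpa using h2.mul_const ‖h‖
      refine h3.congr (fun s => ?_)
      have e1 : x + t • ι h + ι ((s - t) • h) = x + s • ι h := by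
        rw [map_smul]
        module
      rw [e1]
      simp only [ContinuousLinearMap.zero_apply, sub_zero, smul_zero, norm_smul,
        Real.norm_eq_abs]
      rcases eq_or_ne s t with rfl | hst
      · simp
      · have habs : (0:ℝ) < |s - t| := abs_pos.mpr (sub_ne_zero.mpr hst)
        rw [norm_sub_rev (φ (x + s • ι h))]
        field_simp
    have hdiff : Differentiable ℝ (fun t : ℝ => φ (x + t • ι h)) :=
      fun t => (key t).differentiableAt
    have hderiv : ∀ t : ℝ, deriv (fun t : ℝ => φ (x + t • ι h)) t = 0 :=
      fun t => (key t).deriv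
    have := is_const_of_deriv_eq_zero hdiff hderiv 1 0
    simpa using this
  -- Step 2: density
  intro x y
  have hS : IsClosed {z : X | φ z = φ x} := isClosed_eq hφ continuous_const
  have hdense' : Dense (Set.range fun h : H0 => x + ι h) := by
    have : (fun h : H0 => x + ι h) = (Homeomorph.addLeft x) ∘ ι := rfl
    rw [this, Set.range_comp]
    exact (Homeomorph.addLeft x).isDenseEmbedding.dense_image.mpr hdense
  have hsub : Set.range (fun h : H0 => x + ι h) ⊆ {z : X | φ z = φ x} := by
    rintro _ ⟨h, rfl⟩
    exact step1 x h
  have : y ∈ {z : X | φ z = φ x} := by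
    have := hS.closure_subset
    have hy : y ∈ closure (Set.range fun h : H0 => x + ι h) := hdense' y
    exact hS.closure_subset ((closure_mono hsub) hy)
  exact this.symm
end

section
/- Let H be a separable Hilbert space and R ∈ L(H) self-adjoint with pseudo-inverse R⁻¹. A function φ : H → ℝ is R-differentiable at x if and only if it is H_R-Gateaux differentiable at x, and in that case ⟨∇_{G,H_R}φ(x), h⟩_{H_R} = ⟨R∇_Rφ(x), h⟩_{H_R} for all h ∈ H_R, equivalently ⟨∇_Rφ(x), v⟩_H = ⟨R⁻¹∇_{G,H_R}φ(x), v⟩_H for all v ∈ H. In particular ‖∇_Rφ(x)‖_H = ‖∇_{G,H_R}φ(x)‖_{H_R}. -/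
open Filter Topology RealInnerProductSpace

/-- `φ : H → ℝ` is `R`-differentiable at `x` (with gradient in `(ker R)ᗮ`)
if and only if it is `H_R`-Gateaux differentiable at `x` (with gradient `g ∈ H_R = R(H)`,
the derivative along `h ∈ H_R` being `⟪Rinv g, Rinv h⟫`, the `H_R` inner product).
Moreover the gradients `l = ∇_R φ(x)` and `g = ∇_{G,H_R} φ(x)` are related by
`⟪l, v⟫ = ⟪Rinv g, v⟫` for all `v ∈ H`, and `‖l‖_H = ‖Rinv g‖_H = ‖g‖_{H_R}`. -/
theorem statement7
    {H : Type*} [NormedAddCommGroup H] [InnerProductSpace ℝ H] [CompleteSpace H]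
    [TopologicalSpace.SeparableSpace H]
    (R : H →L[ℝ] H) (hR : IsSelfAdjoint R)
    (Rinv : H → H)
    (hRinv1 : ∀ y ∈ LinearMap.range (R : H →ₗ[ℝ] H), R (Rinv y) = y)
    (hRinv2 : ∀ y ∈ LinearMap.range (R : H →ₗ[ℝ] H), Rinv y ∈ (LinearMap.ker (R : H →ₗ[ℝ] H))ᗮ)
    (φ : H → ℝ) (x : H) :
    ((∃ l ∈ (LinearMap.ker (R : H →ₗ[ℝ] H))ᗮ, ∀ v : H,
        Tendsto (fun s : ℝ => s⁻¹ * (φ (x + s • R v) - φ x)) (𝓝[≠] 0) (𝓝 ⟪l, v⟫)) ↔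
      (∃ g ∈ LinearMap.range (R : H →ₗ[ℝ] H), ∀ h ∈ LinearMap.range (R : H →ₗ[ℝ] H),
        Tendsto (fun s : ℝ => s⁻¹ * (φ (x + s • h) - φ x)) (𝓝[≠] 0) (𝓝 ⟪Rinv g, Rinv h⟫)))
    ∧
    (∀ l g : H, l ∈ (LinearMap.ker (R : H →ₗ[ℝ] H))ᗮ → g ∈ LinearMap.range (R : H →ₗ[ℝ] H) →
      (∀ v : H,
        Tendsto (fun s : ℝ => s⁻¹ * (φ (x + s • R v) - φ x)) (𝓝[≠] 0) (𝓝 ⟪l, v⟫)) →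
      (∀ h ∈ LinearMap.range (R : H →ₗ[ℝ] H),
        Tendsto (fun s : ℝ => s⁻¹ * (φ (x + s • h) - φ x)) (𝓝[≠] 0) (𝓝 ⟪Rinv g, Rinv h⟫)) →
      (∀ v : H, ⟪l, v⟫ = ⟪Rinv g, v⟫) ∧ ‖l‖ = ‖Rinv g‖) := by
  -- `Rinv (R v) - v` lies in `ker R`
  have hmemK : ∀ v : H, Rinv (R v) - v ∈ LinearMap.ker (R : H →ₗ[ℝ] H) := by
    intro v
    have h1 : R (Rinv (R v)) = R v := hRinv1 (R v) ⟨v, rfl⟩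
    simp [LinearMap.mem_ker, map_sub, h1]
  -- for `l ⊥ ker R`, `⟪l, Rinv (R v)⟫ = ⟪l, v⟫`
  have horth : ∀ l ∈ (LinearMap.ker (R : H →ₗ[ℝ] H))ᗮ, ∀ v : H, ⟪l, Rinv (R v)⟫ = ⟪l, v⟫ := by
    intro l hl v
    have h0 : ⟪Rinv (R v) - v, l⟫ = 0 := hl _ (hmemK v)
    have h0' : ⟪l, Rinv (R v) - v⟫ = 0 := by rwa [real_inner_comm]
    rw [inner_sub_right] at h0'
    linarith
  -- element of `ker R ∩ (ker R)ᗮ` is 0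
  have hzero : ∀ u : H, u ∈ LinearMap.ker (R : H →ₗ[ℝ] H) → u ∈ (LinearMap.ker (R : H →ₗ[ℝ] H))ᗮ → u = 0 := by
    intro u h1 h2
    have : ⟪u, u⟫ = 0 := h2 u h1
    exact inner_self_eq_zero.mp this
  constructor
  · constructor
    · rintro ⟨l, hl, hder⟩
      refine ⟨R l, ⟨l, rfl⟩, ?_⟩
      have hl' : Rinv (R l) = l := by
        have h1 : Rinv (R l) - l ∈ LinearMap.ker (R : H →ₗ[ℝ] H) := hmemK l
        have h2 : Rinv (R l) - l ∈ (LinearMap.ker (R : H →ₗ[ℝ] H))ᗮ :=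
          Submodule.sub_mem _ (hRinv2 _ ⟨l, rfl⟩) hl
        have := hzero _ h1 h2
        rwa [sub_eq_zero] at this
      rintro h ⟨v, rfl⟩
      have : ⟪Rinv (R l), Rinv (R v)⟫ = ⟪l, v⟫ := by
        rw [hl']; exact horth l hl v
      rw [ContinuousLinearMap.coe_coe, this]
      exact hder v
    · rintro ⟨g, hg, hder⟩
      refine ⟨Rinv g, hRinv2 g hg, fun v => ?_⟩
      have h1 := hder (R v) ⟨v, rfl⟩
      rwa [horth _ (hRinv2 g hg) v] at h1
  · intro l g hl hg h1 h2
    have heq : ∀ v : H, ⟪l, v⟫ = ⟪Rinv g, v⟫ := by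
      intro v
      have ha := h1 v
      have hb := h2 (R v) ⟨v, rfl⟩
      rw [horth _ (hRinv2 g hg) v] at hb
      exact tendsto_nhds_unique ha hb
    refine ⟨heq, ?_⟩
    have : l = Rinv g := by
      have h0 : ∀ v : H, ⟪l - Rinv g, v⟫ = 0 := by
        intro v; rw [inner_sub_left, heq v]; ring
      have := h0 (l - Rinv g)
      rw [inner_self_eq_zero] at this
      rwa [sub_eq_zero] at this
    rw [this]
end

section
/- Let H be a separable Hilbert space and R ∈ L(H) self-adjoint. For α ∈ (0,1), the real interpolation space (BUC(H), Lip_{b,R}(H))_{α,∞} (K-method) coincides, with equivalent norms, with the space BUC^α_R(H) of bounded uniformly continuous functions that are R-Hölder of exponent α. -/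
open Filter Topology RealInnerProductSpace

section Defs

variable {H : Type*} [NormedAddCommGroup H] [InnerProductSpace ℝ H]

/-- Sup norm `‖f‖_∞` (as a real supremum of the set of values `|f x|`). -/
noncomputable def supNorm (f : H → ℝ) : ℝ :=
  sSup {r : ℝ | ∃ x : H, r = |f x|}

/-- `f` is bounded and uniformly continuous, i.e. `f ∈ BUC(H)`. -/
def IsBUC (f : H → ℝ) : Prop :=
  (∃ C : ℝ, ∀ x, |f x| ≤ C) ∧ UniformContinuous f

/-- The `R`-Lipschitz seminorm `[f]_R = sup_{x, v ≠ 0} |f(x+Rv) − f(x)| / ‖v‖`. -/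
noncomputable def lipSeminormR (R : H →L[ℝ] H) (f : H → ℝ) : ℝ :=
  sSup {r : ℝ | ∃ x v : H, v ≠ 0 ∧ r = |f (x + R v) - f x| / ‖v‖}

/-- `f ∈ Lip_{b,R}(H)`: bounded, uniformly continuous and `R`-Lipschitz. -/
def IsLipbR (R : H →L[ℝ] H) (f : H → ℝ) : Prop :=
  IsBUC f ∧ ∃ L : ℝ, ∀ x v : H, |f (x + R v) - f x| ≤ L * ‖v‖

/-- The `R`-Hölder seminorm `[f]_{R,α} = sup_{x, v ≠ 0} |f(x+Rv) − f(x)| / ‖v‖^α`. -/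
noncomputable def holderSeminormR (R : H →L[ℝ] H) (α : ℝ) (f : H → ℝ) : ℝ :=
  sSup {r : ℝ | ∃ x v : H, v ≠ 0 ∧ r = |f (x + R v) - f x| / ‖v‖ ^ α}

/-- The `K`-functional for the couple `(BUC(H), Lip_{b,R}(H))`:
`K(r,f) = inf { ‖a‖_∞ + r ‖b‖_{Lip_{b,R}} : f = a + b, a ∈ BUC, b ∈ Lip_{b,R} }`. -/
noncomputable def Kfunctional (R : H →L[ℝ] H) (r : ℝ) (f : H → ℝ) : ℝ :=
  sInf {s : ℝ | ∃ a b : H → ℝ, (∀ x, f x = a x + b x) ∧ IsBUC a ∧ IsLipbR R b ∧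
    s = supNorm a + r * (supNorm b + lipSeminormR R b)}

/-- The norm of the real interpolation space `(BUC(H), Lip_{b,R}(H))_{α,∞}`:
`sup_{r > 0} r^{−α} K(r,f)`. -/
noncomputable def interpNorm (R : H →L[ℝ] H) (α : ℝ) (f : H → ℝ) : ℝ :=
  sSup {s : ℝ | ∃ r : ℝ, 0 < r ∧ s = r ^ (-α) * Kfunctional R r f}

end Defs

section Aux

variable {H : Type*} [NormedAddCommGroup H] [InnerProductSpace ℝ H]

lemma supNorm_nonneg (f : H → ℝ) : 0 ≤ supNorm f :=
  Real.sSup_nonneg (by rintro r ⟨x, rfl⟩; positivity)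

lemma supNorm_le {f : H → ℝ} {C : ℝ} (hC : 0 ≤ C) (h : ∀ x, |f x| ≤ C) :
    supNorm f ≤ C :=
  Real.sSup_le (by rintro r ⟨x, rfl⟩; exact h x) hC

lemma abs_le_supNorm {f : H → ℝ} (h : ∃ C : ℝ, ∀ x, |f x| ≤ C) (x : H) :
    |f x| ≤ supNorm f := by
  obtain ⟨C, hC⟩ := h
  exact le_csSup ⟨C, by rintro r ⟨y, rfl⟩; exact hC y⟩ ⟨x, rfl⟩

lemma lipSeminormR_nonneg (R : H →L[ℝ] H) (f : H → ℝ) : 0 ≤ lipSeminormR R f :=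
  Real.sSup_nonneg (by rintro r ⟨x, v, hv, rfl⟩; positivity)

lemma holderSeminormR_nonneg (R : H →L[ℝ] H) (α : ℝ) (f : H → ℝ) :
    0 ≤ holderSeminormR R α f :=
  Real.sSup_nonneg (by rintro r ⟨x, v, hv, rfl⟩; positivity)

lemma lipSeminormR_le {R : H →L[ℝ] H} {f : H → ℝ} {L : ℝ} (hL : 0 ≤ L)
    (h : ∀ x v : H, |f (x + R v) - f x| ≤ L * ‖v‖) : lipSeminormR R f ≤ L := by
  refine Real.sSup_le ?_ hL
  rintro r ⟨x, v, hv, rfl⟩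
  rw [div_le_iff₀ (norm_pos_iff.mpr hv)]
  exact h x v

lemma holderSeminormR_le {R : H →L[ℝ] H} {α : ℝ} {f : H → ℝ} {L : ℝ} (hα : 0 < α) (hL : 0 ≤ L)
    (h : ∀ x v : H, |f (x + R v) - f x| ≤ L * ‖v‖ ^ α) : holderSeminormR R α f ≤ L := by
  refine Real.sSup_le ?_ hL
  rintro r ⟨x, v, hv, rfl⟩
  rw [div_le_iff₀ (Real.rpow_pos_of_pos (norm_pos_iff.mpr hv) α)]
  exact h x v

lemma abs_sub_le_lip {R : H →L[ℝ] H} {f : H → ℝ}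
    (h : ∃ L : ℝ, ∀ x v : H, |f (x + R v) - f x| ≤ L * ‖v‖)
    (x v : H) : |f (x + R v) - f x| ≤ lipSeminormR R f * ‖v‖ := by
  obtain ⟨L, hL⟩ := h
  rcases eq_or_ne v 0 with rfl | hv
  · simp
  · have hnv : (0:ℝ) < ‖v‖ := norm_pos_iff.mpr hv
    have hle : |f (x + R v) - f x| / ‖v‖ ≤ lipSeminormR R f := by
      apply le_csSup
      · refine ⟨L, ?_⟩
        rintro r ⟨y, w, hw, rfl⟩
        rw [div_le_iff₀ (norm_pos_iff.mpr hw)]; exact hL y w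
      · exact ⟨x, v, hv, rfl⟩
    calc |f (x + R v) - f x| = |f (x + R v) - f x| / ‖v‖ * ‖v‖ := by field_simp
    _ ≤ lipSeminormR R f * ‖v‖ := by gcongr

lemma abs_sub_le_holder {R : H →L[ℝ] H} {α : ℝ} {f : H → ℝ} (hα : 0 < α)
    (h : ∃ L : ℝ, ∀ x v : H, |f (x + R v) - f x| ≤ L * ‖v‖ ^ α)
    (x v : H) : |f (x + R v) - f x| ≤ holderSeminormR R α f * ‖v‖ ^ α := by
  obtain ⟨L, hL⟩ := h
  rcases eq_or_ne v 0 with rfl | hv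
  · simp [Real.zero_rpow hα.ne']
  · have hnv : (0:ℝ) < ‖v‖ ^ α := Real.rpow_pos_of_pos (norm_pos_iff.mpr hv) α
    have hle : |f (x + R v) - f x| / ‖v‖ ^ α ≤ holderSeminormR R α f := by
      apply le_csSup
      · refine ⟨L, ?_⟩
        rintro r ⟨y, w, hw, rfl⟩
        rw [div_le_iff₀ (Real.rpow_pos_of_pos (norm_pos_iff.mpr hw) α)]; exact hL y w
      · exact ⟨x, v, hv, rfl⟩
    calc |f (x + R v) - f x| = |f (x + R v) - f x| / ‖v‖ ^ α * ‖v‖ ^ α := by field_simp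
    _ ≤ holderSeminormR R α f * ‖v‖ ^ α := by gcongr

lemma isBUC_zero : IsBUC (fun _ : H => (0:ℝ)) :=
  ⟨⟨0, fun _ => by simp⟩, uniformContinuous_const⟩

lemma isLipbR_zero (R : H →L[ℝ] H) : IsLipbR R (fun _ : H => (0:ℝ)) :=
  ⟨isBUC_zero, 0, fun x v => by simp⟩

lemma supNorm_zero : supNorm (fun _ : H => (0:ℝ)) = 0 :=
  le_antisymm (supNorm_le le_rfl (by simp)) (supNorm_nonneg _)

lemma lipSeminormR_zero (R : H →L[ℝ] H) : lipSeminormR R (fun _ : H => (0:ℝ)) = 0 :=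
  le_antisymm (lipSeminormR_le le_rfl (by simp)) (lipSeminormR_nonneg _ _)

lemma Kset_nonneg {R : H →L[ℝ] H} {r : ℝ} (hr : 0 ≤ r) {f : H → ℝ} :
    ∀ s ∈ {s : ℝ | ∃ a b : H → ℝ, (∀ x, f x = a x + b x) ∧ IsBUC a ∧ IsLipbR R b ∧
      s = supNorm a + r * (supNorm b + lipSeminormR R b)}, 0 ≤ s := by
  rintro s ⟨a, b, -, -, -, rfl⟩
  exact add_nonneg (supNorm_nonneg a)
    (mul_nonneg hr (add_nonneg (supNorm_nonneg b) (lipSeminormR_nonneg R b)))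

lemma Kfunctional_nonneg (R : H →L[ℝ] H) {r : ℝ} (hr : 0 ≤ r) (f : H → ℝ) :
    0 ≤ Kfunctional R r f :=
  Real.sInf_nonneg (Kset_nonneg hr)

lemma Kfunctional_le {R : H →L[ℝ] H} {r : ℝ} (hr : 0 ≤ r) {f a b : H → ℝ}
    (hab : ∀ x, f x = a x + b x) (ha : IsBUC a) (hb : IsLipbR R b) :
    Kfunctional R r f ≤ supNorm a + r * (supNorm b + lipSeminormR R b) :=
  csInf_le ⟨0, fun s hs => Kset_nonneg hr s hs⟩ ⟨a, b, hab, ha, hb, rfl⟩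

lemma le_Kfunctional {R : H →L[ℝ] H} {r : ℝ} {f : H → ℝ} (hf : IsBUC f) {c : ℝ}
    (hc : ∀ a b : H → ℝ, (∀ x, f x = a x + b x) → IsBUC a → IsLipbR R b →
      c ≤ supNorm a + r * (supNorm b + lipSeminormR R b)) :
    c ≤ Kfunctional R r f := by
  refine le_csInf ⟨supNorm f + r * (supNorm (fun _ : H => (0:ℝ)) +
    lipSeminormR R (fun _ : H => (0:ℝ))), f, (fun _ => 0), by simp, hf, isLipbR_zero R, rfl⟩ ?_
  rintro s ⟨a, b, hab, ha, hb, rfl⟩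
  exact hc a b hab ha hb

lemma rpow_key {α r s : ℝ} (hα : α ∈ Set.Ioo (0:ℝ) 1) (hr : 0 < r) (hs : 0 ≤ s) :
    s ^ α ≤ r ^ α + r ^ (α - 1) * s := by
  rcases le_total s r with h | h
  · have h1 : s ^ α ≤ r ^ α := Real.rpow_le_rpow hs h hα.1.le
    nlinarith [mul_nonneg (Real.rpow_nonneg hr.le (α - 1)) hs]
  · have hs0 : 0 < s := lt_of_lt_of_le hr h
    have h1 : s ^ (α - 1) * s = s ^ α := by
      rw [← Real.rpow_add_one hs0.ne' (α - 1)]; ring_nf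
    have h2 : s ^ (α - 1) ≤ r ^ (α - 1) :=
      Real.rpow_le_rpow_of_nonpos hr h (by linarith [hα.2])
    nlinarith [Real.rpow_nonneg hr.le α]

end Aux

section Upper

variable {H : Type*} [NormedAddCommGroup H] [InnerProductSpace ℝ H]

lemma interp_upper (R : H →L[ℝ] H) {α : ℝ} (hα : α ∈ Set.Ioo (0:ℝ) 1) {f : H → ℝ}
    (hf : IsBUC f) {L : ℝ} (hL : 0 ≤ L)
    (hfL : ∀ x v : H, |f (x + R v) - f x| ≤ L * ‖v‖ ^ α)
    {r : ℝ} (hr : 0 < r) :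
    r ^ (-α) * Kfunctional R r f ≤ 3 * (supNorm f + L) := by
  obtain ⟨⟨C, hC⟩, hfu⟩ := hf
  have hsup := supNorm_nonneg f
  rcases le_or_gt 1 r with h1r | hr1
  · have hK : Kfunctional R r f ≤ supNorm f := by
      have h := Kfunctional_le (R := R) hr.le (f := f) (a := f) (b := fun _ => 0)
        (by simp) ⟨⟨C, hC⟩, hfu⟩ (isLipbR_zero R)
      simpa [supNorm_zero, lipSeminormR_zero] using h
    have hKn : 0 ≤ Kfunctional R r f := Kfunctional_nonneg _ hr.le _
    have hrp : r ^ (-α) ≤ 1 :=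
      Real.rpow_le_one_of_one_le_of_nonpos h1r (by linarith [hα.1])
    have hrpn : 0 ≤ r ^ (-α) := Real.rpow_nonneg hr.le _
    nlinarith
  · set t := L * r ^ (α - 1) with ht_def
    have htn : 0 ≤ t := mul_nonneg hL (Real.rpow_nonneg hr.le _)
    have hbdd : ∀ x : H, BddBelow (Set.range fun v : H => f (x + R v) + t * ‖v‖) := by
      intro x
      refine ⟨-C, ?_⟩
      rintro s ⟨v, rfl⟩
      show -C ≤ f (x + R v) + t * ‖v‖
      have h1 := abs_le.1 (hC (x + R v))
      linarith [mul_nonneg htn (norm_nonneg v), h1.1]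
    set b : H → ℝ := fun x => ⨅ v : H, (f (x + R v) + t * ‖v‖) with hb_def
    have hble : ∀ x, b x ≤ f x := by
      intro x
      have h := ciInf_le (hbdd x) (0 : H)
      simpa using h
    have hLrα : 0 ≤ L * r ^ α := mul_nonneg hL (Real.rpow_nonneg hr.le _)
    have hfb : ∀ x, f x - b x ≤ L * r ^ α := by
      intro x
      have h : f x - L * r ^ α ≤ b x := by
        refine le_ciInf fun v => ?_
        have h1 : f x - f (x + R v) ≤ L * ‖v‖ ^ α := by
          have h2 := (abs_le.1 (hfL x v)).1
          linarith
        have h2 : ‖v‖ ^ α ≤ r ^ α + r ^ (α - 1) * ‖v‖ := rpow_key hα hr (norm_nonneg v)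
        have h3 : L * ‖v‖ ^ α ≤ L * r ^ α + t * ‖v‖ := by
          rw [ht_def]
          nlinarith [mul_le_mul_of_nonneg_left h2 hL]
        show f x - L * r ^ α ≤ f (x + R v) + t * ‖v‖
        linarith
      linarith
    have hblip1 : ∀ x w : H, b (x + R w) ≤ b x + t * ‖w‖ := by
      intro x w
      have key : ∀ u : H, b (x + R w) - t * ‖w‖ ≤ f (x + R u) + t * ‖u‖ := by
        intro u
        have h1 : b (x + R w) ≤ f (x + R w + R (u - w)) + t * ‖u - w‖ :=
          ciInf_le (hbdd _) (u - w)
        have h2 : x + R w + R (u - w) = x + R u := by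
          rw [map_sub]; abel
        rw [h2] at h1
        have h3 : ‖u - w‖ ≤ ‖u‖ + ‖w‖ := norm_sub_le u w
        nlinarith
      have h := le_ciInf key
      linarith [h]
    have hblip2 : ∀ x w : H, |b (x + R w) - b x| ≤ t * ‖w‖ := by
      intro x w
      rw [abs_sub_le_iff]
      constructor
      · linarith [hblip1 x w]
      · have h := hblip1 (x + R w) (-w)
        have h2 : x + R w + R (-w) = x := by rw [map_neg]; abel
        rw [h2] at h
        simp only [norm_neg] at h
        linarith
    have hbabs : ∀ x, |b x| ≤ C + L * r ^ α := by
      intro x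
      have h1 := hble x
      have h2 := hfb x
      have h3 := abs_le.1 (hC x)
      rw [abs_le]
      constructor <;> linarith [h3.1, h3.2]
    have hbuc : UniformContinuous b := by
      rw [Metric.uniformContinuous_iff]
      intro ε hε
      obtain ⟨δ, hδ, hδf⟩ := Metric.uniformContinuous_iff.1 hfu (ε/2) (by linarith)
      refine ⟨δ, hδ, ?_⟩
      have key : ∀ x y : H, dist x y < δ → b x ≤ b y + ε/2 := by
        intro x y hxy
        have h : b x - ε/2 ≤ b y := by
          refine le_ciInf fun v => ?_
          have h1 : b x ≤ f (x + R v) + t * ‖v‖ := ciInf_le (hbdd x) v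
          have h2 : dist (x + R v) (y + R v) < δ := by rwa [dist_add_right]
          have h3 := hδf h2
          rw [Real.dist_eq] at h3
          have h4 := abs_le.1 h3.le
          linarith [h4.1, h4.2]
        linarith
      intro x y hxy
      have h1 := key x y hxy
      have h2 := key y x (by rwa [dist_comm])
      rw [Real.dist_eq, abs_lt]
      constructor <;> linarith
    set a : H → ℝ := fun x => f x - b x with ha_def
    have haBUC : IsBUC a := by
      refine ⟨⟨L * r ^ α, fun x => ?_⟩, hfu.sub hbuc⟩
      rw [abs_le]
      have h1 := hfb x
      have h2 := hble x
      constructor <;> simp only [ha_def] <;> linarith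
    have hbBUC : IsBUC b := ⟨⟨C + L * r ^ α, hbabs⟩, hbuc⟩
    have hbLip : IsLipbR R b := ⟨hbBUC, t, hblip2⟩
    have hK := Kfunctional_le (R := R) hr.le (f := f) (a := a) (b := b)
      (fun x => by simp [ha_def]) haBUC hbLip
    have hsa : supNorm a ≤ L * r ^ α := by
      refine supNorm_le hLrα fun x => ?_
      rw [abs_le]
      have h1 := hfb x
      have h2 := hble x
      constructor <;> simp only [ha_def] <;> linarith
    have hsb : supNorm b ≤ supNorm f + L * r ^ α := by
      refine supNorm_le (by linarith) fun x => ?_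
      have h1 := hble x
      have h2 := hfb x
      have h3 := abs_le.1 (abs_le_supNorm ⟨C, hC⟩ x)
      rw [abs_le]
      constructor <;> linarith [h3.1, h3.2]
    have hlb : lipSeminormR R b ≤ t := lipSeminormR_le htn hblip2
    have hKA : Kfunctional R r f ≤
        L * r ^ α + r * supNorm f + r * (L * r ^ α) + r * (L * r ^ (α - 1)) := by
      have hsbn := supNorm_nonneg b
      have hlbn := lipSeminormR_nonneg R b
      nlinarith [hK, hsa, hsb, hlb, hr.le]
    have hP0 : 0 ≤ r ^ (-α) := Real.rpow_nonneg hr.le _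
    have e1 : r ^ (-α) * r ^ α = 1 := by
      rw [← Real.rpow_add hr, show -α + α = 0 by ring, Real.rpow_zero]
    have e2 : r ^ ((1:ℝ) - α) = r ^ (-α) * r := by
      rw [show (1:ℝ) - α = -α + 1 by ring, Real.rpow_add hr, Real.rpow_one]
    have e6 : r ^ ((1:ℝ) - α) * r ^ α = r := by
      rw [← Real.rpow_add hr, show (1:ℝ) - α + α = 1 by ring, Real.rpow_one]
    have e4 : r ^ ((1:ℝ) - α) * r ^ (α - 1) = 1 := by
      rw [← Real.rpow_add hr, show (1:ℝ) - α + (α - 1) = 0 by ring, Real.rpow_zero]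
    have e3 : r ^ ((1:ℝ) - α) ≤ 1 := Real.rpow_le_one hr.le hr1.le (by linarith [hα.2])
    have e3' : 0 ≤ r ^ ((1:ℝ) - α) := Real.rpow_nonneg hr.le _
    have step1 : r ^ (-α) * Kfunctional R r f ≤
        r ^ (-α) * (L * r ^ α + r * supNorm f + r * (L * r ^ α) + r * (L * r ^ (α - 1))) :=
      mul_le_mul_of_nonneg_left hKA hP0
    have step2 : r ^ (-α) * (L * r ^ α + r * supNorm f + r * (L * r ^ α) + r * (L * r ^ (α - 1)))
        = L + r ^ ((1:ℝ) - α) * supNorm f + L * (r ^ ((1:ℝ) - α) * r ^ α) + L := by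
      linear_combination (L : ℝ) * e1 - supNorm f * e2 - L * r ^ α * e2 -
        L * r ^ (α - 1) * e2 + L * e4
    rw [step2, e6] at step1
    nlinarith [step1, mul_nonneg e3' hsup]
end Upper

section Lower

variable {H : Type*} [NormedAddCommGroup H] [InnerProductSpace ℝ H]

lemma supNorm_le_K_one {R : H →L[ℝ] H} {f : H → ℝ} (hf : IsBUC f) :
    supNorm f ≤ Kfunctional R 1 f := by
  refine le_Kfunctional hf fun a b hab ha hb => ?_
  have h1 : ∀ x, |f x| ≤ supNorm a + supNorm b := fun x => by
    rw [hab x]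
    calc |a x + b x| ≤ |a x| + |b x| := abs_add_le _ _
    _ ≤ _ := add_le_add (abs_le_supNorm ha.1 x) (abs_le_supNorm hb.1.1 x)
  have h2 := supNorm_le (add_nonneg (supNorm_nonneg a) (supNorm_nonneg b)) h1
  have h3 := lipSeminormR_nonneg R b
  linarith

lemma abs_sub_le_two_K {R : H →L[ℝ] H} {f : H → ℝ} (hf : IsBUC f) (x v : H) :
    |f (x + R v) - f x| ≤ 2 * Kfunctional R ‖v‖ f := by
  have h := le_Kfunctional (R := R) (r := ‖v‖) hf (c := |f (x + R v) - f x| / 2) ?_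
  · linarith [h]
  · intro a b hab ha hb
    have hΔ : |f (x + R v) - f x| ≤ 2 * supNorm a + lipSeminormR R b * ‖v‖ := by
      have e : f (x + R v) - f x = (a (x + R v) - a x) + (b (x + R v) - b x) := by
        rw [hab, hab]; ring
      calc |f (x + R v) - f x|
          ≤ |a (x + R v) - a x| + |b (x + R v) - b x| := by rw [e]; exact abs_add_le _ _
        _ ≤ (|a (x + R v)| + |a x|) + lipSeminormR R b * ‖v‖ :=
            add_le_add (abs_sub _ _) (abs_sub_le_lip hb.2 x v)
        _ ≤ 2 * supNorm a + lipSeminormR R b * ‖v‖ := by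
            linarith [abs_le_supNorm ha.1 (x + R v), abs_le_supNorm ha.1 x]
    have h3 := supNorm_nonneg b
    have h4 := supNorm_nonneg a
    have h5 := lipSeminormR_nonneg R b
    nlinarith [mul_nonneg (norm_nonneg v) h3, mul_nonneg (norm_nonneg v) h5]

end Lower

/-- For `α ∈ (0,1)`, the real interpolation space
`(BUC(H), Lip_{b,R}(H))_{α,∞}` (K-method) coincides with `BUC^α_R(H)`, with equivalence of
norms: a bounded uniformly continuous `f` is `R`-Hölder of exponent `α` iff
`sup_{r>0} r^{−α}K(r,f) < ∞`, and there are constants `C₁, C₂ > 0` with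
`‖f‖_{(·,·)_{α,∞}} ≤ C₁ ‖f‖_{BUC^α_R}` and `‖f‖_{BUC^α_R} ≤ C₂ ‖f‖_{(·,·)_{α,∞}}` for all such
`f`. -/
theorem statement17
    {H : Type*} [NormedAddCommGroup H] [InnerProductSpace ℝ H] [CompleteSpace H]
    [TopologicalSpace.SeparableSpace H]
    (R : H →L[ℝ] H) (hR : IsSelfAdjoint R)
    (α : ℝ) (hα : α ∈ Set.Ioo (0 : ℝ) 1) :
    ∃ C₁ C₂ : ℝ, 0 < C₁ ∧ 0 < C₂ ∧
      ∀ f : H → ℝ, IsBUC f →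
        (((∃ L : ℝ, 0 ≤ L ∧ ∀ x v : H, |f (x + R v) - f x| ≤ L * ‖v‖ ^ α) ↔
            BddAbove {s : ℝ | ∃ r : ℝ, 0 < r ∧ s = r ^ (-α) * Kfunctional R r f}) ∧
          ((∃ L : ℝ, 0 ≤ L ∧ ∀ x v : H, |f (x + R v) - f x| ≤ L * ‖v‖ ^ α) →
            interpNorm R α f ≤ C₁ * (supNorm f + holderSeminormR R α f) ∧
              supNorm f + holderSeminormR R α f ≤ C₂ * interpNorm R α f)) := by
  refine ⟨3, 3, by norm_num, by norm_num, fun f hf => ?_⟩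
  have hα0 := hα.1
  set S := {s : ℝ | ∃ r : ℝ, 0 < r ∧ s = r ^ (-α) * Kfunctional R r f} with hS_def
  have hIN : interpNorm R α f = sSup S := rfl
  have hmem1 : Kfunctional R 1 f ∈ S := ⟨1, one_pos, by simp [Real.one_rpow]⟩
  -- forward direction: Hölder → bounded
  have fwd : (∃ L : ℝ, 0 ≤ L ∧ ∀ x v : H, |f (x + R v) - f x| ≤ L * ‖v‖ ^ α) →
      BddAbove S := by
    rintro ⟨L, hL, hfL⟩
    refine ⟨3 * (supNorm f + L), ?_⟩
    rintro s ⟨r, hr, rfl⟩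
    exact interp_upper R hα hf hL hfL hr
  -- backward direction
  have key : BddAbove S → ∀ x v : H, |f (x + R v) - f x| ≤ 2 * sSup S * ‖v‖ ^ α := by
    intro hB x v
    have hM0 : 0 ≤ sSup S :=
      le_trans (Kfunctional_nonneg R zero_le_one f) (le_csSup hB hmem1)
    rcases eq_or_ne v 0 with rfl | hv
    · simp [Real.zero_rpow hα0.ne']
    · have hnv : (0:ℝ) < ‖v‖ := norm_pos_iff.mpr hv
      have hKmem : ‖v‖ ^ (-α) * Kfunctional R ‖v‖ f ∈ S := ⟨‖v‖, hnv, rfl⟩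
      have hle : ‖v‖ ^ (-α) * Kfunctional R ‖v‖ f ≤ sSup S := le_csSup hB hKmem
      have hpos : (0:ℝ) < ‖v‖ ^ α := Real.rpow_pos_of_pos hnv α
      have e1 : ‖v‖ ^ α * ‖v‖ ^ (-α) = 1 := by
        rw [← Real.rpow_add hnv, show α + -α = 0 by ring, Real.rpow_zero]
      have hKle : Kfunctional R ‖v‖ f ≤ ‖v‖ ^ α * sSup S := by
        have h2 := mul_le_mul_of_nonneg_left hle hpos.le
        calc Kfunctional R ‖v‖ f
            = ‖v‖ ^ α * (‖v‖ ^ (-α) * Kfunctional R ‖v‖ f) := by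
              rw [← mul_assoc, e1, one_mul]
          _ ≤ ‖v‖ ^ α * sSup S := h2
      have h3 := abs_sub_le_two_K (R := R) hf x v
      calc |f (x + R v) - f x| ≤ 2 * Kfunctional R ‖v‖ f := h3
        _ ≤ 2 * (‖v‖ ^ α * sSup S) := by linarith
        _ = 2 * sSup S * ‖v‖ ^ α := by ring
  have bwd : BddAbove S →
      (∃ L : ℝ, 0 ≤ L ∧ ∀ x v : H, |f (x + R v) - f x| ≤ L * ‖v‖ ^ α) := by
    intro hB
    have hM0 : 0 ≤ sSup S :=
      le_trans (Kfunctional_nonneg R zero_le_one f) (le_csSup hB hmem1)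
    exact ⟨2 * sSup S, by linarith, key hB⟩
  refine ⟨⟨fwd, bwd⟩, ?_⟩
  rintro hHol
  have hB : BddAbove S := fwd hHol
  have hM0 : 0 ≤ sSup S :=
    le_trans (Kfunctional_nonneg R zero_le_one f) (le_csSup hB hmem1)
  have hhol0 := holderSeminormR_nonneg R α f
  have hsup0 := supNorm_nonneg f
  constructor
  · -- interpNorm ≤ 3 * (supNorm f + holderSeminorm)
    rw [hIN]
    refine Real.sSup_le ?_ (by linarith)
    rintro s ⟨r, hr, rfl⟩
    exact interp_upper R hα hf hhol0 (abs_sub_le_holder hα0 ⟨hHol.choose,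
      hHol.choose_spec.2⟩) hr
  · -- supNorm f + holderSeminorm ≤ 3 * interpNorm
    rw [hIN]
    have h1 : supNorm f ≤ sSup S :=
      le_trans (supNorm_le_K_one hf) (le_csSup hB hmem1)
    have h2 : holderSeminormR R α f ≤ 2 * sSup S :=
      holderSeminormR_le hα0 (by linarith) (key hB)
    linarith
end
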